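/- Let n ≥ 1 and d ≥ 1. Let P_n be the path graph on n vertices (vertices 1,…,n with edges {i, i+1}), and let S^d denote the unit sphere in Euclidean space ℝ^{d+1}. Then the graphical configuration space Conf_{P_n}(S^d) is homotopy equivalent to S^d. -/

import Mathlib

/-- The graphical configuration space `Conf_Γ(X)`: functions `x : V → X` such that
adjacent vertices of `Γ` are sent to distinct points, with the subspace topology
inherited from the product space `X^V`. -/
abbrev GraphConf {V : Type*} (Γ : SimpleGraph V) (X : Type*) [TopologicalSpace X] : Type _ :=
  {x : V → X // ∀ v w : V, Γ.Adj v w → x v ≠ x w}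

noncomputable section PathConfAux

open Metric SimpleGraph ContinuousMap unitInterval

variable {E : Type*} [NormedAddCommGroup E] [NormedSpace ℝ E]

/-- The normalized segment from `-b` (at `t = 0`) to `a` (at `t = 1`). -/
def gd (a b : E) (t : ℝ) : E :=
  ‖t • a - (1 - t) • b‖⁻¹ • (t • a - (1 - t) • b)

lemma seg_ne_zero {a b : E} (ha : ‖a‖ = 1) (hb : ‖b‖ = 1) (hab : a ≠ b)
    {t : ℝ} (ht0 : 0 ≤ t) (ht1 : t ≤ 1) : t • a - (1 - t) • b ≠ 0 := by
  intro h
  have h' : t • a = (1 - t) • b := sub_eq_zero.mp h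
  have hn : |t| = |1 - t| := by
    have := congrArg norm h'
    simpa [norm_smul, ha, hb] using this
  rw [abs_of_nonneg ht0, abs_of_nonneg (by linarith)] at hn
  have ht : t = 1 / 2 := by linarith
  apply hab
  have h2 : (1 / 2 : ℝ) • a = (1 / 2 : ℝ) • b := by
    rw [ht] at h'; convert h' using 2; norm_num
  exact smul_right_injective E (by norm_num : (1 / 2 : ℝ) ≠ 0) h2

lemma gd_norm {a b : E} (ha : ‖a‖ = 1) (hb : ‖b‖ = 1) (hab : a ≠ b)
    {t : ℝ} (ht0 : 0 ≤ t) (ht1 : t ≤ 1) : ‖gd a b t‖ = 1 := by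
  have h0 := seg_ne_zero ha hb hab ht0 ht1
  rw [gd, norm_smul, norm_inv, norm_norm,
    inv_mul_cancel₀ (norm_ne_zero_iff.mpr h0)]

lemma gd_ne {a b : E} (ha : ‖a‖ = 1) (hb : ‖b‖ = 1) (hab : a ≠ b)
    {t : ℝ} (ht0 : 0 ≤ t) (ht1 : t ≤ 1) : gd a b t ≠ b := by
  set v := t • a - (1 - t) • b with hv
  have hv0 : v ≠ 0 := seg_ne_zero ha hb hab ht0 ht1
  intro h
  have h1 : v = ‖v‖ • b := by
    rw [← h, gd, smul_smul, mul_inv_cancel₀ (norm_ne_zero_iff.mpr hv0), one_smul]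
  have h2 : t • a = (‖v‖ + (1 - t)) • b := by
    rw [hv, sub_eq_iff_eq_add] at h1
    rw [add_smul, h1]
  have h3 : t = ‖v‖ + (1 - t) := by
    have := congrArg norm h2
    rw [norm_smul, norm_smul, ha, hb, mul_one, mul_one, Real.norm_eq_abs,
      Real.norm_eq_abs, abs_of_nonneg ht0,
      abs_of_nonneg (by have := norm_nonneg v; linarith)] at this
    exact this
  have ht' : t ≠ 0 := by
    intro h0; rw [h0] at h3; have := norm_nonneg v; linarith
  apply hab
  rw [← h3] at h2
  exact smul_right_injective E ht' h2

lemma gd_zero {a b : E} (hb : ‖b‖ = 1) : gd a b 0 = -b := by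
  have : ‖(-b : E)‖ = 1 := by simpa using hb
  simp [gd, this]

lemma gd_one {a b : E} (ha : ‖a‖ = 1) : gd a b 1 = a := by
  simp [gd, ha]

lemma gd_cont {X : Type*} [TopologicalSpace X] {a b : X → E} {t : X → ℝ}
    (ha : Continuous a) (hb : Continuous b) (ht : Continuous t)
    (hne : ∀ x, t x • a x - (1 - t x) • b x ≠ 0) :
    Continuous fun x => gd (a x) (b x) (t x) := by
  have hseg : Continuous fun x => t x • a x - (1 - t x) • b x :=
    (ht.smul ha).sub ((continuous_const.sub ht).smul hb)
  exact (hseg.norm.inv₀ fun x => norm_ne_zero_iff.mpr (hne x)).smul hseg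

lemma neg_ne_self_of_norm_one {b : E} (hb : ‖b‖ = 1) : (-b : E) ≠ b := by
  intro h
  have h2 : b + b = 0 := neg_eq_iff_add_eq_zero.mp h
  have h3 : (2 : ℝ) • b = 0 := by rw [two_smul]; exact h2
  have : b = 0 := by simpa using (smul_eq_zero.mp h3).resolve_left (by norm_num)
  rw [this] at hb; simp at hb

/-- Abbreviation for the `d`-sphere. -/
abbrev Sph (d : ℕ) := Metric.sphere (0 : EuclideanSpace ℝ (Fin (d + 1))) 1

/-- Abbreviation for the configuration space of the path graph on the sphere. -/
abbrev Cn (d m : ℕ) : Type _ := GraphConf (SimpleGraph.pathGraph m) (Sph d)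

lemma sph_norm {d : ℕ} (a : Sph d) : ‖(a : EuclideanSpace ℝ (Fin (d + 1)))‖ = 1 := by
  simpa [mem_sphere_iff_norm] using a.2

lemma adj_castSucc {m : ℕ} {i j : Fin (m + 1)}
    (h : (pathGraph (m + 1)).Adj i j) :
    (pathGraph (m + 2)).Adj i.castSucc j.castSucc := by
  rw [SimpleGraph.pathGraph_adj] at h ⊢
  simpa using h

lemma adj_last {m : ℕ} {j : Fin (m + 1)}
    (h : (pathGraph (m + 2)).Adj (Fin.last (m + 1)) j.castSucc) :
    j = Fin.last m := by
  rw [SimpleGraph.pathGraph_adj] at h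
  have hj := j.isLt
  simp only [Fin.val_last, Fin.coe_castSucc] at h
  ext
  simp only [Fin.val_last]
  omega

lemma adj_last_secondlast {m : ℕ} :
    (pathGraph (m + 2)).Adj (Fin.last (m + 1)) ((Fin.last m).castSucc) := by
  rw [SimpleGraph.pathGraph_adj]
  simp

/-- The projection forgetting the last point. -/
def projC {d m : ℕ} (x : Cn d (m + 2)) : Cn d (m + 1) :=
  ⟨fun i => x.1 i.castSucc, fun v w h => x.2 _ _ (adj_castSucc h)⟩

/-- The section appending the antipode of the last point. -/
def secC {d m : ℕ} (x : Cn d (m + 1)) : Cn d (m + 2) :=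
  ⟨Fin.lastCases ⟨-(x.1 (Fin.last m) : EuclideanSpace ℝ (Fin (d + 1))),
      by simpa [mem_sphere_iff_norm] using sph_norm (x.1 (Fin.last m))⟩
    (fun i => x.1 i), by
    intro v w h
    induction v using Fin.lastCases with
    | last =>
      induction w using Fin.lastCases with
      | last => exact absurd rfl h.ne
      | cast j =>
        have hj : j = Fin.last m := adj_last h
        subst hj
        simp only [Fin.lastCases_last, Fin.lastCases_castSucc]
        intro hc
        have hc' := congrArg Subtype.val hc
        exact neg_ne_self_of_norm_one (sph_norm (x.1 (Fin.last m))) hc'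
    | cast i =>
      induction w using Fin.lastCases with
      | last =>
        have hj : i = Fin.last m := adj_last h.symm
        subst hj
        simp only [Fin.lastCases_last, Fin.lastCases_castSucc]
        intro hc
        have hc' := congrArg Subtype.val hc
        exact neg_ne_self_of_norm_one (sph_norm (x.1 (Fin.last m))) hc'.symm
      | cast j =>
        simp only [Fin.lastCases_castSucc]
        refine x.2 _ _ ?_
        rw [SimpleGraph.pathGraph_adj] at h ⊢
        simpa using h⟩

lemma projC_cont {d m : ℕ} : Continuous (projC : Cn d (m + 2) → Cn d (m + 1)) := by
  refine Continuous.subtype_mk (continuous_pi fun i => ?_) _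
  exact (continuous_apply _).comp continuous_subtype_val

lemma secC_cont {d m : ℕ} : Continuous (secC : Cn d (m + 1) → Cn d (m + 2)) := by
  refine Continuous.subtype_mk (continuous_pi fun v => ?_) _
  induction v using Fin.lastCases with
  | last =>
    simp only [secC, Fin.lastCases_last]
    exact Continuous.subtype_mk
      (((continuous_apply _).comp continuous_subtype_val).subtype_val.neg) _
  | cast i =>
    simp only [secC, Fin.lastCases_castSucc]
    exact (continuous_apply _).comp continuous_subtype_val

/-- One step of the deformation retraction: `Conf_{P_{m+2}}(S^d) ≃ₕ Conf_{P_{m+1}}(S^d)`. -/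
lemma step (d m : ℕ) :
    Nonempty (ContinuousMap.HomotopyEquiv (Cn d (m + 2)) (Cn d (m + 1))) := by
  classical
  -- abbreviations for points
  set E' := EuclideanSpace ℝ (Fin (d + 1))
  have hab : ∀ x : Cn d (m + 2),
      (x.1 (Fin.last (m + 1)) : E') ≠ (x.1 ((Fin.last m).castSucc) : E') :=
    fun x => Subtype.coe_ne_coe.mpr (x.2 _ _ adj_last_secondlast)
  -- the homotopy underlying function
  let Hf : I × Cn d (m + 2) → Fin (m + 2) → E' := fun q =>
    Fin.lastCases
      (gd (q.2.1 (Fin.last (m + 1)) : E') (q.2.1 ((Fin.last m).castSucc) : E') (q.1 : ℝ))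
      (fun i => (q.2.1 i.castSucc : E'))
  have hnorm : ∀ q : I × Cn d (m + 2), ∀ v, ‖Hf q v‖ = 1 := by
    intro q v
    induction v using Fin.lastCases with
    | last =>
      simp only [Hf, Fin.lastCases_last]
      exact gd_norm (sph_norm _) (sph_norm _) (hab q.2) q.1.2.1 q.1.2.2
    | cast i => simpa only [Hf, Fin.lastCases_castSucc] using sph_norm _
  have hne : ∀ q : I × Cn d (m + 2), ∀ v w, (pathGraph (m + 2)).Adj v w →
      Hf q v ≠ Hf q w := by
    intro q v w h
    induction v using Fin.lastCases with
    | last =>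
      induction w using Fin.lastCases with
      | last => exact absurd rfl h.ne
      | cast j =>
        have hj : j = Fin.last m := adj_last h
        subst hj
        simp only [Hf, Fin.lastCases_last, Fin.lastCases_castSucc]
        exact gd_ne (sph_norm _) (sph_norm _) (hab q.2) q.1.2.1 q.1.2.2
    | cast i =>
      induction w using Fin.lastCases with
      | last =>
        have hj : i = Fin.last m := adj_last h.symm
        subst hj
        simp only [Hf, Fin.lastCases_last, Fin.lastCases_castSucc]
        exact (gd_ne (sph_norm _) (sph_norm _) (hab q.2) q.1.2.1 q.1.2.2).symm
      | cast j =>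
        simp only [Hf, Fin.lastCases_castSucc]
        refine Subtype.coe_ne_coe.mpr (q.2.2 _ _ ?_)
        rw [SimpleGraph.pathGraph_adj] at h ⊢
        simpa using h
  -- the homotopy as a map into the configuration space
  let H : I × Cn d (m + 2) → Cn d (m + 2) := fun q =>
    ⟨fun v => ⟨Hf q v, by rw [mem_sphere_iff_norm, sub_zero]; exact hnorm q v⟩,
      fun v w h hc => hne q v w h (congrArg Subtype.val hc)⟩
  have Hcont : Continuous H := by
    refine Continuous.subtype_mk (continuous_pi fun v => Continuous.subtype_mk ?_ _) _
    induction v using Fin.lastCases with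
    | last =>
      simp only [Hf, Fin.lastCases_last]
      refine gd_cont ?_ ?_ ?_ ?_
      · exact ((continuous_apply _).comp (continuous_subtype_val.comp
          continuous_snd)).subtype_val
      · exact ((continuous_apply _).comp (continuous_subtype_val.comp
          continuous_snd)).subtype_val
      · exact continuous_subtype_val.comp continuous_fst
      · exact fun q => seg_ne_zero (sph_norm _) (sph_norm _) (hab q.2) q.1.2.1 q.1.2.2
    | cast i =>
      simp only [Hf, Fin.lastCases_castSucc]
      exact ((continuous_apply _).comp (continuous_subtype_val.comp
        continuous_snd)).subtype_val
  refine ⟨⟨⟨projC, projC_cont⟩, ⟨secC, secC_cont⟩, ⟨⟨⟨H, Hcont⟩, ?_, ?_⟩⟩, ?_⟩⟩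
  · -- at time 0 : secC ∘ projC
    intro x
    apply Subtype.ext
    funext v
    apply Subtype.ext
    induction v using Fin.lastCases with
    | last =>
      show Hf (0, x) (Fin.last (m + 1)) = _
      simp only [Hf, Fin.lastCases_last, ContinuousMap.comp_apply,
        ContinuousMap.coe_mk, secC, projC]
      rw [show ((0 : I) : ℝ) = 0 from rfl, gd_zero (sph_norm _)]
    | cast i =>
      show Hf (0, x) i.castSucc = _
      simp [Hf, secC, projC]
  · -- at time 1 : identity
    intro x
    apply Subtype.ext
    funext v
    apply Subtype.ext
    induction v using Fin.lastCases with
    | last =>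
      show Hf (1, x) (Fin.last (m + 1)) = _
      simp only [Hf, Fin.lastCases_last]
      rw [show ((1 : I) : ℝ) = 1 from rfl, gd_one (sph_norm _)]
      simp
    | cast i =>
      show Hf (1, x) i.castSucc = _
      simp [Hf]
  · -- projC ∘ secC = id
    have : (ContinuousMap.mk projC projC_cont).comp
        (ContinuousMap.mk secC secC_cont) = ContinuousMap.id (Cn d (m + 1)) := by
      ext x v
      simp [projC, secC]
    rw [this]

/-- The configuration space on one vertex is homeomorphic to the sphere. -/
lemma const_mem_conf_one {d : ℕ} (p : Sph d) :
    ∀ v w : Fin 1, (pathGraph 1).Adj v w → (fun _ : Fin 1 => p) v ≠ (fun _ : Fin 1 => p) w := by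
  intro v w h
  rw [Subsingleton.elim v w] at h
  exact absurd h ((pathGraph 1).loopless.irrefl w)

def confOne (d : ℕ) : Cn d 1 ≃ₜ Sph d where
  toFun x := x.1 0
  invFun p := ⟨fun _ => p, const_mem_conf_one p⟩
  left_inv x := Subtype.ext (funext fun v => by rw [Subsingleton.elim v 0])
  right_inv p := rfl
  continuous_toFun := (continuous_apply 0).comp continuous_subtype_val
  continuous_invFun :=
    Continuous.subtype_mk (continuous_pi fun _ => continuous_id) const_mem_conf_one

lemma key (d m : ℕ) :
    Nonempty (ContinuousMap.HomotopyEquiv (Cn d (m + 1)) (Sph d)) := by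
  induction m with
  | zero => exact ⟨(confOne d).toHomotopyEquiv⟩
  | succ k ih =>
    obtain ⟨e⟩ := ih
    obtain ⟨f⟩ := step d k
    exact ⟨f.trans e⟩

end PathConfAux

/-- For `n ≥ 1` and `d ≥ 1`, the graphical configuration space `Conf_{P_n}(S^d)` of the
path graph `P_n` on the `d`-sphere `S^d ⊆ ℝ^{d+1}` is homotopy equivalent to `S^d`. -/
theorem pathGraph_conf_sphere_homotopyEquiv_sphere
    (n : ℕ) (hn : 1 ≤ n) (d : ℕ) (hd : 1 ≤ d) :
    Nonempty
      (ContinuousMap.HomotopyEquiv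
        (GraphConf (SimpleGraph.pathGraph n)
          (Metric.sphere (0 : EuclideanSpace ℝ (Fin (d + 1))) 1))
        (Metric.sphere (0 : EuclideanSpace ℝ (Fin (d + 1))) 1)) := by
  obtain ⟨m, rfl⟩ : ∃ m, n = m + 1 := ⟨n - 1, by omega⟩
  exact key d m
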